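/- Let R be a factorial domain and s : -ℕ → R a sequence with Ann(s) ≠ (0). Then Ann(s) is a principal ideal generated by a primitive polynomial g, unique up to a unit of R; moreover gcd(g, β₀(g,s)/X) = 1 and deg g = min{deg f : f ∈ Ann(s), f ≠ 0}. -/

import Mathlib

noncomputable section

variable {R : Type*}

/-- Right-shift action on a 1-D sequence indexed by `-ℕ`: index `b : ℕ` encodes `-b`,
so `(f ∘ s)_{-b} = ∑ f_a s_{-b-a}`. -/
def shiftR1 [CommSemiring R] (f : Polynomial R) (s : ℕ → R) : ℕ → R :=
  fun b => ∑ a ∈ Finset.range (f.natDegree + 1), f.coeff a * s (b + a)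

/-- The generating function `Γ(s) = ∑_{c ≤ 0} s_c X^c` as coefficient function on `ℤ`. -/
def Gamma1 [Zero R] (s : ℕ → R) : ℤ → R :=
  fun c => if c ≤ 0 then s (-c).toNat else 0

/-- Coefficient function of the product `f · G` in `R((X⁻¹))`. -/
def polyMul1 [CommSemiring R] (f : Polynomial R) (G : ℤ → R) : ℤ → R :=
  fun c => ∑ a ∈ Finset.range (f.natDegree + 1), f.coeff a * G (c - (a : ℤ))

/-- Coefficient function on `ℤ` of a polynomial. -/
def toZfun [Semiring R] (p : Polynomial R) : ℤ → R :=
  fun c => if 0 ≤ c then p.coeff c.toNat else 0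

/-- The border polynomial `β₀(f,s) = (f·Γ(s)) | [1, deg f]`. -/
def beta0Poly1 [CommSemiring R] (f : Polynomial R) (s : ℕ → R) : Polynomial R :=
  ∑ c ∈ Finset.Icc 1 f.natDegree, Polynomial.monomial c (polyMul1 f (Gamma1 s) (c : ℤ))

/-- `β₀(f,s) / X`. -/
def beta0DivX1 [CommSemiring R] (f : Polynomial R) (s : ℕ → R) : Polynomial R :=
  ∑ c ∈ Finset.Icc 1 f.natDegree, Polynomial.monomial (c - 1) (polyMul1 f (Gamma1 s) (c : ℤ))

namespace Stmt10Aux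

open Polynomial

variable {A : Type*} [CommRing A]

/-- shift operator -/
def E (A : Type*) [CommRing A] : Module.End A (ℤ → A) where
  toFun G := fun c => G (c - 1)
  map_add' := by intros; rfl
  map_smul' := by intros; rfl

lemma E_pow (a : ℕ) (G : ℤ → A) (c : ℤ) : ((E A ^ a) G) c = G (c - a) := by
  induction a generalizing G c with
  | zero => simp
  | succ n ih =>
    have : (E A ^ (n+1)) G = (E A ^ n) (E A G) := by
      rw [pow_succ, Module.End.mul_apply]
    rw [this, ih]
    show G (c - n - 1) = _
    congr 1; push_cast; ring

lemma aeval_apply (f : Polynomial A) (G : ℤ → A) (c : ℤ) :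
    (Polynomial.aeval (E A) f) G c = ∑ a ∈ f.support, f.coeff a * G (c - a) := by
  rw [Polynomial.aeval_def, Polynomial.eval₂_eq_sum, Polynomial.sum]
  rw [LinearMap.coe_sum, Finset.sum_apply, Finset.sum_apply]
  refine Finset.sum_congr rfl fun a _ => ?_
  rw [Module.End.mul_apply, Module.algebraMap_end_apply]
  show f.coeff a • ((E A ^ a) G) c = _
  rw [E_pow, smul_eq_mul]

lemma polyMul1_eq (f : Polynomial A) (G : ℤ → A) :
    polyMul1 f G = (Polynomial.aeval (E A) f) G := by
  funext c
  rw [aeval_apply, polyMul1]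
  refine (Finset.sum_subset (f.supp_subset_range_natDegree_succ) fun a _ ha => ?_).symm
  rw [Polynomial.notMem_support_iff.mp ha, zero_mul]


/-- cancellation: R((X⁻¹)) is a domain -/
lemma cancel [IsDomain A] (f : Polynomial A) (hf : f ≠ 0) (u : ℤ → A) (N : ℤ)
    (hu : ∀ c, N < c → u c = 0) (h : (Polynomial.aeval (E A) f) u = 0) : u = 0 := by
  by_contra hne
  have hex : ∃ c, u c ≠ 0 := by
    by_contra hc
    push_neg at hc
    exact hne (funext hc)
  obtain ⟨c₀, hc₀, hmax⟩ := Int.exists_greatest_of_bdd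
    ⟨N, fun z hz => le_of_not_gt fun hlt => hz (hu z hlt)⟩ hex
  set d := f.natDegree
  have h0 : (Polynomial.aeval (E A) f) u (c₀ + d) = 0 := by rw [h]; rfl
  rw [← polyMul1_eq, polyMul1] at h0
  rw [Finset.sum_eq_single_of_mem d (Finset.self_mem_range_succ d)
    (fun a ha hane => ?_)] at h0
  · have : c₀ + (d : ℤ) - d = c₀ := by ring
    rw [this] at h0
    rcases mul_eq_zero.mp h0 with h1 | h1
    · exact Polynomial.leadingCoeff_ne_zero.mpr hf h1
    · exact hc₀ h1
  · have ha' : a < d := lt_of_le_of_ne (Nat.lt_succ_iff.mp (Finset.mem_range.mp ha)) hane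
    have : u (c₀ + (d : ℤ) - a) = 0 := by
      by_contra hun
      have := hmax _ hun
      omega
    rw [this, mul_zero]

lemma gamma_zero_of_pos (s : ℕ → A) {c : ℤ} (hc : 0 < c) : Gamma1 s c = 0 := by
  rw [Gamma1, if_neg (by omega)]

lemma shiftR1_eq (f : Polynomial A) (s : ℕ → A) (b : ℕ) :
    shiftR1 f s b = polyMul1 f (Gamma1 s) (-(b : ℤ)) := by
  rw [shiftR1, polyMul1]
  refine Finset.sum_congr rfl fun a _ => ?_
  rw [Gamma1]
  rw [if_pos (by omega)]
  have h1 : (-(-(b:ℤ) - (a:ℤ))).toNat = b + a := by omega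
  rw [h1]

lemma mem_ann_iff (f : Polynomial A) (s : ℕ → A) :
    shiftR1 f s = 0 ↔ ∀ c ≤ (0 : ℤ), (Polynomial.aeval (E A) f) (Gamma1 s) c = 0 := by
  constructor
  · intro hf c hc
    have hb : c = -(((-c).toNat : ℕ) : ℤ) := by omega
    rw [hb, ← polyMul1_eq, ← shiftR1_eq, hf]
    rfl
  · intro h
    funext b
    rw [shiftR1_eq, polyMul1_eq]
    exact h _ (by omega)

lemma ann_zero (s : ℕ → A) : shiftR1 (0 : Polynomial A) s = 0 := by
  funext b; simp [shiftR1]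

lemma ann_add (s : ℕ → A) {f g : Polynomial A} (hf : shiftR1 f s = 0)
    (hg : shiftR1 g s = 0) : shiftR1 (f + g) s = 0 := by
  rw [mem_ann_iff] at hf hg ⊢
  intro c hc
  rw [map_add]
  show (Polynomial.aeval (E A) f) (Gamma1 s) c + (Polynomial.aeval (E A) g) (Gamma1 s) c = 0
  rw [hf c hc, hg c hc, add_zero]

lemma ann_mul (s : ℕ → A) {f : Polynomial A} (h : Polynomial A) (hf : shiftR1 f s = 0) :
    shiftR1 (h * f) s = 0 := by
  rw [mem_ann_iff] at hf ⊢
  intro c hc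
  rw [map_mul, Module.End.mul_apply, aeval_apply]
  refine Finset.sum_eq_zero fun a _ => ?_
  rw [hf (c - a) (by omega), mul_zero]

/-- the annihilator ideal -/
def annIdeal (s : ℕ → A) : Ideal (Polynomial A) where
  carrier := {f | shiftR1 f s = 0}
  zero_mem' := ann_zero s
  add_mem' := ann_add s
  smul_mem' := fun h f hf => ann_mul s h hf

@[simp] lemma mem_annIdeal_iff (s : ℕ → A) (f : Polynomial A) :
    f ∈ annIdeal s ↔ shiftR1 f s = 0 := Iff.rfl

/-- delta at 0 -/
def delta (A : Type*) [CommRing A] : ℤ → A := fun c => if c = 0 then 1 else 0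

lemma toZfun_eq (p : Polynomial A) : toZfun p = (Polynomial.aeval (E A) p) (delta A) := by
  funext c
  rw [aeval_apply, toZfun]
  by_cases hc : 0 ≤ c
  · rw [if_pos hc]
    have : ∀ a ∈ p.support, p.coeff a * delta A (c - a) =
        if a = c.toNat then p.coeff a else 0 := by
      intro a _
      rw [delta]
      by_cases hac : a = c.toNat
      · rw [if_pos (by omega), if_pos hac, mul_one]
      · rw [if_neg (show ¬((c : ℤ) - a = 0) by omega), mul_zero, if_neg hac]
    rw [Finset.sum_congr rfl this, Finset.sum_ite_eq' p.support c.toNat]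
    by_cases hm : c.toNat ∈ p.support
    · rw [if_pos hm]
    · rw [if_neg hm, Polynomial.notMem_support_iff.mp hm]
  · rw [if_neg hc]
    refine (Finset.sum_eq_zero fun a _ => ?_).symm
    rw [delta, if_neg (by omega), mul_zero]

lemma aeval_toZfun (f p : Polynomial A) :
    (Polynomial.aeval (E A) f) (toZfun p) = toZfun (f * p) := by
  rw [toZfun_eq, toZfun_eq, map_mul, Module.End.mul_apply]


lemma beta0Poly1_coeff (f : Polynomial A) (s : ℕ → A) (n : ℕ) :
    (beta0Poly1 f s).coeff n =
      if n ∈ Finset.Icc 1 f.natDegree then polyMul1 f (Gamma1 s) n else 0 := by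
  rw [beta0Poly1, Polynomial.finset_sum_coeff]
  rw [Finset.sum_congr rfl (fun c _ => Polynomial.coeff_monomial)]
  exact Finset.sum_ite_eq' _ _ _

lemma beta0_X_mul (f : Polynomial A) (s : ℕ → A) :
    beta0Poly1 f s = Polynomial.X * beta0DivX1 f s := by
  rw [beta0DivX1, Finset.mul_sum, beta0Poly1]
  refine Finset.sum_congr rfl fun c hc => ?_
  have hc1 : 1 ≤ c := (Finset.mem_Icc.mp hc).1
  rw [show (Polynomial.X : Polynomial A) = Polynomial.monomial 1 1 from
      (Polynomial.monomial_one_one_eq_X).symm, Polynomial.monomial_mul_monomial, one_mul]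
  have : 1 + (c - 1) = c := by omega
  rw [this]

lemma polyMul1_gamma_bound (f : Polynomial A) (s : ℕ → A) {c : ℤ}
    (hc : (f.natDegree : ℤ) < c) : polyMul1 f (Gamma1 s) c = 0 := by
  rw [polyMul1]
  refine Finset.sum_eq_zero fun a ha => ?_
  have : a < f.natDegree + 1 := Finset.mem_range.mp ha
  rw [gamma_zero_of_pos s (by omega), mul_zero]

lemma toZfun_bound (p : Polynomial A) {c : ℤ} (hc : (p.natDegree : ℤ) < c) :
    toZfun p c = 0 := by
  rw [toZfun, if_pos (by omega)]
  exact Polynomial.coeff_eq_zero_of_natDegree_lt (by omega)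

lemma polyMul1_eq_beta0 (g : Polynomial A) (s : ℕ → A) (hg : shiftR1 g s = 0) (c : ℤ) :
    polyMul1 g (Gamma1 s) c = toZfun (beta0Poly1 g s) c := by
  have hvan : ∀ c ≤ (0:ℤ), polyMul1 g (Gamma1 s) c = 0 := by
    intro c hc
    rw [polyMul1_eq]
    exact (mem_ann_iff g s).mp hg c hc
  rcases le_or_gt c 0 with hc | hc
  · rw [hvan c hc, toZfun]
    rcases eq_or_lt_of_le hc with h0 | h0
    · rw [h0] at *
      rw [if_pos le_rfl, beta0Poly1_coeff, if_neg]
      simp [Finset.mem_Icc]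
    · rw [if_neg (by omega)]
  · rw [toZfun, if_pos (by omega), beta0Poly1_coeff]
    by_cases hd : c ≤ (g.natDegree : ℤ)
    · rw [if_pos (Finset.mem_Icc.mpr (by omega))]
      congr 1
      omega
    · rw [if_neg (fun hmem => ?_), polyMul1_gamma_bound g s (by omega)]
      have := (Finset.mem_Icc.mp hmem).2
      omega

lemma shiftR1_map {B : Type*} [CommRing B] (φ : A →+* B) (hinj : Function.Injective φ)
    (f : Polynomial A) (s : ℕ → A) (b : ℕ) :
    shiftR1 (f.map φ) (fun n => φ (s n)) b = φ (shiftR1 f s b) := by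
  rw [shiftR1, shiftR1, map_sum, Polynomial.natDegree_map_eq_of_injective hinj]
  exact Finset.sum_congr rfl fun a _ => by rw [Polynomial.coeff_map, map_mul]

lemma ann_map_iff {B : Type*} [CommRing B] (φ : A →+* B) (hinj : Function.Injective φ)
    (f : Polynomial A) (s : ℕ → A) :
    shiftR1 f s = 0 ↔ shiftR1 (f.map φ) (fun n => φ (s n)) = 0 := by
  constructor
  · intro h
    funext b
    show shiftR1 (f.map φ) _ b = 0
    rw [shiftR1_map φ hinj, show shiftR1 f s b = 0 from congrFun h b, map_zero]
  · intro h
    funext b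
    show shiftR1 f s b = 0
    apply hinj
    rw [map_zero, ← shiftR1_map φ hinj]
    exact congrFun h b

end Stmt10Aux

/-- over a factorial domain, if `Ann(s) ≠ (0)` then `Ann(s)` is principal,
generated by a primitive polynomial `g`, unique up to a unit; moreover
`gcd(g, β₀(g,s)/X) = 1` and `deg g` is minimal among nonzero characteristic polynomials. -/
theorem stmt10 [CommRing R] [IsDomain R] [UniqueFactorizationMonoid R]
    (s : ℕ → R) (hann : ∃ f : Polynomial R, f ≠ 0 ∧ shiftR1 f s = 0) :
    ∃ g : Polynomial R, g.IsPrimitive ∧ (∀ h : Polynomial R, shiftR1 h s = 0 ↔ g ∣ h) ∧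
      (∀ g' : Polynomial R, g'.IsPrimitive → (∀ h : Polynomial R, shiftR1 h s = 0 ↔ g' ∣ h) →
        Associated g g') ∧
      (∀ e : Polynomial R, e ∣ g → e ∣ beta0DivX1 g s → IsUnit e) ∧
      (∀ h : Polynomial R, h ≠ 0 → shiftR1 h s = 0 → g.natDegree ≤ h.natDegree) := by
  classical
  letI : NormalizationMonoid R := UniqueFactorizationMonoid.normalizationMonoid.toNormalizationMonoid
  letI : NormalizedGCDMonoid R := UniqueFactorizationMonoid.toNormalizedGCDMonoid R
  set K := FractionRing R with hK
  let φ : R →+* K := algebraMap R K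
  have hinj : Function.Injective φ := IsFractionRing.injective R K
  set s' : ℕ → K := fun n => φ (s n) with hs'
  obtain ⟨f₀, hf₀ne, hf₀⟩ := hann
  obtain ⟨g₀, hg₀⟩ := Submodule.IsPrincipal.principal (Stmt10Aux.annIdeal s')
  have hmemK : ∀ f : Polynomial K, shiftR1 f s' = 0 ↔ g₀ ∣ f := by
    intro f
    rw [← Stmt10Aux.mem_annIdeal_iff, hg₀]
    exact Ideal.mem_span_singleton
  have hg₀ne : g₀ ≠ 0 := by
    intro h
    apply hf₀ne
    have h2 : f₀.map φ = 0 := by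
      have := (hmemK (f₀.map φ)).mp ((Stmt10Aux.ann_map_iff φ hinj f₀ s).mp hf₀)
      rw [h] at this
      exact zero_dvd_iff.mp this
    exact (Polynomial.map_eq_zero_iff hinj).mp h2
  obtain ⟨b, hb⟩ := IsLocalization.integerNormalization_map_to_map (nonZeroDivisors R) g₀
  set g₁ := IsLocalization.integerNormalization (nonZeroDivisors R) g₀ with hg₁def
  have hbne : φ (b : R) ≠ 0 := fun h =>
    nonZeroDivisors.coe_ne_zero b (hinj (by rw [h, map_zero]))
  have hg₁map : g₁.map φ = Polynomial.C (φ (b : R)) * g₀ := by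
    rw [hb, ← algebraMap_smul K ((b : R)) g₀, Polynomial.smul_eq_C_mul]
  have hg₁ne : g₁ ≠ 0 := by
    intro h
    have : g₁.map φ = 0 := by rw [h, Polynomial.map_zero]
    rw [hg₁map] at this
    exact (mul_ne_zero (fun hc => hbne (Polynomial.C_eq_zero.mp hc)) hg₀ne) this
  set g := g₁.primPart with hgdef
  have hgprim : g.IsPrimitive := g₁.isPrimitive_primPart
  have hgne : g ≠ 0 := g₁.primPart_ne_zero
  have hcontne : φ g₁.content ≠ 0 := fun h =>
    Polynomial.content_eq_zero_iff.not.mpr hg₁ne (hinj (by rw [h, map_zero]))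
  have hgmap : Polynomial.C (φ g₁.content) * g.map φ = Polynomial.C (φ (b : R)) * g₀ := by
    have h1 := congrArg (Polynomial.map φ) g₁.eq_C_content_mul_primPart
    rw [Polynomial.map_mul, Polynomial.map_C] at h1
    exact h1.symm.trans hg₁map
  have hassoc : Associated (g.map φ) g₀ := by
    have hu1 : IsUnit (Polynomial.C (φ g₁.content)) :=
      Polynomial.isUnit_C.mpr (isUnit_iff_ne_zero.mpr hcontne)
    have hu2 : IsUnit (Polynomial.C (φ (b : R))) :=
      Polynomial.isUnit_C.mpr (isUnit_iff_ne_zero.mpr hbne)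
    have h1 : Associated (g.map φ) (Polynomial.C (φ g₁.content) * g.map φ) :=
      ⟨hu1.unit, by rw [IsUnit.unit_spec, mul_comm]⟩
    have h2 : Associated g₀ (Polynomial.C (φ (b : R)) * g₀) :=
      ⟨hu2.unit, by rw [IsUnit.unit_spec, mul_comm]⟩
    exact (hgmap ▸ h1).trans h2.symm
  have hmem : ∀ f : Polynomial R, shiftR1 f s = 0 ↔ g ∣ f := by
    intro f
    rw [Stmt10Aux.ann_map_iff φ hinj f s, hmemK]
    constructor
    · intro hdvd
      have hmapdvd : g.map φ ∣ f.map φ := (hassoc.dvd_iff_dvd_left).mpr hdvd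
      by_cases hf : f = 0
      · rw [hf]; exact dvd_zero g
      · have hfc : φ f.content ≠ 0 := fun h =>
          Polynomial.content_eq_zero_iff.not.mpr hf (hinj (by rw [h, map_zero]))
        have hcu : IsUnit (Polynomial.C (φ f.content)) :=
          Polynomial.isUnit_C.mpr (isUnit_iff_ne_zero.mpr hfc)
        have h4 : g.map φ ∣ (f.primPart).map φ := by
          have hfeq : f.map φ = Polynomial.C (φ f.content) * (f.primPart).map φ := by
            have h1 := congrArg (Polynomial.map φ) f.eq_C_content_mul_primPart
            rwa [Polynomial.map_mul, Polynomial.map_C] at h1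
          rw [hfeq] at hmapdvd
          exact (hcu.dvd_mul_left).mp hmapdvd
        have h5 : g ∣ f.primPart :=
          hgprim.dvd_of_fraction_map_dvd_fraction_map h4
        exact h5.trans f.primPart_dvd
    · rintro ⟨t, rfl⟩
      refine hassoc.symm.dvd.trans ?_
      rw [Polynomial.map_mul]
      exact dvd_mul_right _ _
  refine ⟨g, hgprim, hmem, ?_, ?_, ?_⟩
  · intro g' hp' hiff'
    exact associated_of_dvd_dvd ((hmem g').mp ((hiff' g').mpr dvd_rfl))
      ((hiff' g).mp ((hmem g).mpr dvd_rfl))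
  · intro e he hedvd
    have hganns : shiftR1 g s = 0 := (hmem g).mpr dvd_rfl
    obtain ⟨g₂, hg₂⟩ := he
    obtain ⟨q, hq⟩ := hedvd
    have hene : e ≠ 0 := fun h => hgne (by rw [hg₂, h, zero_mul])
    have hg₂ne : g₂ ≠ 0 := fun h => hgne (by rw [hg₂, h, mul_zero])
    set Γ := Gamma1 s with hΓ
    set u : ℤ → R := (Polynomial.aeval (Stmt10Aux.E R) g₂) Γ - toZfun (Polynomial.X * q)
      with hu
    have hub : ∀ c : ℤ, (max g₂.natDegree (Polynomial.X * q).natDegree : ℤ) < c →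
        u c = 0 := by
      intro c hc
      have hcc1 : (g₂.natDegree : ℤ) < c := lt_of_le_of_lt (by exact_mod_cast le_max_left _ _) hc
      have hcc2 : ((Polynomial.X * q).natDegree : ℤ) < c :=
        lt_of_le_of_lt (by exact_mod_cast le_max_right _ _) hc
      have h1 : (Polynomial.aeval (Stmt10Aux.E R) g₂) Γ c = 0 := by
        rw [← Stmt10Aux.polyMul1_eq]
        exact Stmt10Aux.polyMul1_gamma_bound g₂ s hcc1
      have h2 : toZfun (Polynomial.X * q) c = 0 := Stmt10Aux.toZfun_bound _ hcc2
      rw [hu, Pi.sub_apply, h1, h2, sub_zero]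
    have hkey : (Polynomial.aeval (Stmt10Aux.E R) e) u = 0 := by
      rw [hu, map_sub, Stmt10Aux.aeval_toZfun]
      have hA : (Polynomial.aeval (Stmt10Aux.E R) e) ((Polynomial.aeval (Stmt10Aux.E R) g₂) Γ)
          = (Polynomial.aeval (Stmt10Aux.E R) g) Γ := by
        rw [hg₂, map_mul, Module.End.mul_apply]
      rw [hA]
      have hB : (Polynomial.aeval (Stmt10Aux.E R) g) Γ = toZfun (beta0Poly1 g s) := by
        funext c
        rw [← Stmt10Aux.polyMul1_eq]
        exact Stmt10Aux.polyMul1_eq_beta0 g s hganns c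
      rw [hB, Stmt10Aux.beta0_X_mul g s, hq,
        show Polynomial.X * (e * q) = e * (Polynomial.X * q) by ring, sub_self]
    have hu0 : u = 0 := Stmt10Aux.cancel e hene u _ hub hkey
    have hann₂ : shiftR1 g₂ s = 0 := by
      rw [Stmt10Aux.mem_ann_iff]
      intro c hc
      have heq : (Polynomial.aeval (Stmt10Aux.E R) g₂) Γ c = toZfun (Polynomial.X * q) c := by
        have h3 := congrFun hu0 c
        rw [hu, Pi.sub_apply, Pi.zero_apply, sub_eq_zero] at h3
        exact h3
      rw [heq, toZfun]
      rcases eq_or_lt_of_le hc with h0 | h0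
      · rw [h0, if_pos le_rfl, Int.toNat_zero, Polynomial.mul_coeff_zero,
          Polynomial.coeff_X_zero, zero_mul]
      · rw [if_neg (by omega)]
    have hgdvd : g ∣ g₂ := (hmem g₂).mp hann₂
    obtain ⟨t, ht⟩ := hgdvd
    have heq2 : g₂ * 1 = g₂ * (e * t) := by
      rw [mul_one]
      nth_rewrite 1 [ht, hg₂]
      ring
    exact IsUnit.of_mul_eq_one t (mul_left_cancel₀ hg₂ne heq2).symm
  · intro h hne hanns
    exact Polynomial.natDegree_le_of_dvd ((hmem h).mp hanns) hne
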